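/- Fix integers 0 < p < d, set q := d − p and δ := p/d, and let K > 1 be an integer and δ' ∈ [0, δ). Let b_1, …, b_{K−1} ∈ {0,1} satisfy b_1 + … + b_{K−1} ≤ δ'·(K − 1), and let H_0, …, H_{K−1} be the associated stack-height sequence. Then Σ_{t=0}^{K−1} H_t > (δ − δ')²·d·(K − 1)²/(2δ). -/

import Mathlib

/-- The stack-height sequence determined by parameters `p, q` and bits `b`
(0-indexed: `b i` is the bit `b_{i+1}`): `H_0 = 0`, and `H_{i+1}` is obtained from `H_i`
by adding `p` chips if `b_{i+1} = 0`, and removing `min(q, H_i)` chips if `b_{i+1} = 1`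
(truncated subtraction on `ℕ` realizes `max(H_i - q, 0)`). -/
def stackH (p q : ℕ) (b : ℕ → Bool) : ℕ → ℕ
  | 0 => 0
  | i + 1 => if b i then stackH p q b i - q else stackH p q b i + p

/-- `cars b t` is `b_1 + ⋯ + b_t`. -/
def cars (b : ℕ → Bool) (t : ℕ) : ℕ :=
  ((Finset.range t).filter (fun i => b i = true)).card

lemma cars_succ (b : ℕ → Bool) (t : ℕ) :
    cars b (t + 1) = if b t then cars b t + 1 else cars b t := by
  simp only [cars, Finset.range_add_one, Finset.filter_insert]
  split
  · rw [Finset.card_insert_of_notMem (by simp)]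
  · rfl

lemma cars_mono (b : ℕ → Bool) {s t : ℕ} (h : s ≤ t) : cars b s ≤ cars b t := by
  apply Finset.card_le_card
  exact Finset.filter_subset_filter _ (Finset.range_subset_range.2 h)

lemma stackH_lower (p d : ℕ) (hpd : p ≤ d) (b : ℕ → Bool) (t : ℕ) :
    (p : ℤ) * t - d * cars b t ≤ stackH p (d - p) b t := by
  induction t with
  | zero => simp [stackH, cars]
  | succ t ih =>
      rw [cars_succ]
      by_cases hbt : b t
      · simp only [hbt, if_true, stackH]
        have h1 : (stackH p (d - p) b t : ℤ) - (d - p : ℕ) ≤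
            ((stackH p (d - p) b t - (d - p) : ℕ) : ℤ) := by
          omega
        have hq : ((d - p : ℕ) : ℤ) = (d : ℤ) - p := by omega
        push_cast
        rw [hq] at h1
        nlinarith
      · simp only [hbt, if_false, stackH]
        push_cast
        nlinarith

lemma stackH_lower_real (p d : ℕ) (hpd : p ≤ d) (b : ℕ → Bool) (t : ℕ) :
    (p : ℝ) * t - d * cars b t ≤ (stackH p (d - p) b t : ℝ) := by
  have := stackH_lower p d hpd b t
  exact_mod_cast this

/-- Key combinatorial estimate: `∑_{t=0}^{n} max(0, t - a) > (n - a)^2 / 2`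
for real `0 ≤ a < n`. -/
lemma sum_max_gt (n : ℕ) (a : ℝ) (ha0 : 0 ≤ a) (han : a < n) :
    ((n : ℝ) - a) ^ 2 / 2 < ∑ t ∈ Finset.range (n + 1), max 0 ((t : ℝ) - a) := by
  set m : ℕ := ⌊a⌋₊ with hm
  have hma : (m : ℝ) ≤ a := Nat.floor_le ha0
  have ham : a < (m : ℝ) + 1 := Nat.lt_floor_add_one a
  have hmn : m < n := by
    have : (m : ℝ) < (n : ℝ) := lt_of_le_of_lt hma han
    exact_mod_cast this
  -- restrict sum to Ico (m+1) (n+1)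
  have hsub : Finset.Ico (m + 1) (n + 1) ⊆ Finset.range (n + 1) := by
    intro x hx
    simp only [Finset.mem_Ico] at hx
    simp [Finset.mem_range]
    omega
  have h1 : ∑ t ∈ Finset.Ico (m + 1) (n + 1), max 0 ((t : ℝ) - a)
      ≤ ∑ t ∈ Finset.range (n + 1), max 0 ((t : ℝ) - a) :=
    Finset.sum_le_sum_of_subset_of_nonneg hsub (by intro i _ _; exact le_max_left _ _)
  have h2 : ∑ t ∈ Finset.Ico (m + 1) (n + 1), max 0 ((t : ℝ) - a)
      = ∑ t ∈ Finset.Ico (m + 1) (n + 1), ((t : ℝ) - a) := by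
    apply Finset.sum_congr rfl
    intro t ht
    simp only [Finset.mem_Ico] at ht
    have : a < (t : ℝ) := lt_of_lt_of_le ham (by exact_mod_cast ht.1)
    rw [max_eq_right (by linarith)]
  set k : ℕ := n - m with hk
  have hkn : n = m + k := by omega
  have h3 : ∑ t ∈ Finset.Ico (m + 1) (n + 1), ((t : ℝ) - a)
      = ∑ j ∈ Finset.range k, (((m : ℝ) + 1 + j) - a) := by
    rw [Finset.sum_Ico_eq_sum_range]
    have : n + 1 - (m + 1) = k := by omega
    rw [this]
    apply Finset.sum_congr rfl
    intro j _
    push_cast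
    ring
  have hgauss : ∑ j ∈ Finset.range k, (j : ℝ) = k * (k - 1) / 2 := by
    induction k with
    | zero => simp
    | succ k ih =>
        rw [Finset.sum_range_succ, ih]
        push_cast
        ring
  have h4 : ∑ j ∈ Finset.range k, (((m : ℝ) + 1 + j) - a)
      = (k : ℝ) * (k - 1) / 2 + k * ((m : ℝ) + 1 - a) := by
    calc ∑ j ∈ Finset.range k, (((m : ℝ) + 1 + j) - a)
        = ∑ j ∈ Finset.range k, ((j : ℝ) + ((m : ℝ) + 1 - a)) := by
          apply Finset.sum_congr rfl; intro j _; ring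
      _ = (∑ j ∈ Finset.range k, (j : ℝ)) + (k : ℝ) * ((m : ℝ) + 1 - a) := by
          rw [Finset.sum_add_distrib, Finset.sum_const, Finset.card_range,
            nsmul_eq_mul]
      _ = (k : ℝ) * (k - 1) / 2 + k * ((m : ℝ) + 1 - a) := by rw [hgauss]
  have hk1 : 1 ≤ k := by omega
  have hk1R : (1 : ℝ) ≤ (k : ℝ) := by exact_mod_cast hk1
  have hnR : (n : ℝ) = (m : ℝ) + k := by exact_mod_cast congrArg (Nat.cast : ℕ → ℝ) hkn
  set s : ℝ := a - m with hs
  have hs0 : 0 ≤ s := by simp [hs]; linarith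
  have hs1 : s < 1 := by simp [hs]; linarith
  have hfinal : ((n : ℝ) - a) ^ 2 / 2
      < (k : ℝ) * (k - 1) / 2 + k * ((m : ℝ) + 1 - a) := by
    have hna : (n : ℝ) - a = (k : ℝ) - s := by rw [hnR]; simp [hs]; ring
    have hma' : (m : ℝ) + 1 - a = 1 - s := by simp [hs]; ring
    rw [hna, hma']
    nlinarith [sq_nonneg s, mul_nonneg hs0 hs0]
  calc ((n : ℝ) - a) ^ 2 / 2
      < (k : ℝ) * (k - 1) / 2 + k * ((m : ℝ) + 1 - a) := hfinal
    _ = ∑ t ∈ Finset.Ico (m + 1) (n + 1), max 0 ((t : ℝ) - a) := by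
        rw [h2, h3, h4]
    _ ≤ ∑ t ∈ Finset.range (n + 1), max 0 ((t : ℝ) - a) := h1

theorem stack_height_lower_bound (p d : ℕ) (hp : 0 < p) (hpd : p < d)
    (K : ℕ) (hK : 1 < K) (δ' : ℝ) (hδ'0 : 0 ≤ δ') (hδ' : δ' < (p : ℝ) / d)
    (b : ℕ → Bool) (hb : (cars b (K - 1) : ℝ) ≤ δ' * (K - 1)) :
    ((p : ℝ) / d - δ') ^ 2 * d * ((K : ℝ) - 1) ^ 2 / (2 * ((p : ℝ) / d))
      < ∑ t ∈ Finset.range K, (stackH p (d - p) b t : ℝ) := by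
  set n : ℕ := K - 1 with hn
  have hn1 : 1 ≤ n := by omega
  have hKn : K = n + 1 := by omega
  have hnR : ((K : ℝ) - 1) = (n : ℝ) := by
    rw [hKn]; push_cast; ring
  have hppos : (0 : ℝ) < p := by exact_mod_cast hp
  have hdpos : (0 : ℝ) < d := by exact_mod_cast (hp.trans hpd)
  have hn1R : (1 : ℝ) ≤ (n : ℝ) := by exact_mod_cast hn1
  set c : ℕ := cars b n with hc
  set a : ℝ := (d * c) / p with ha
  have ha0 : 0 ≤ a := by positivity
  have hbn : (c : ℝ) ≤ δ' * n := by rw [hc, hn]; rw [hnR] at hb; exact hb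
  have hδd : δ' * d < p := by
    have h := hδ'
    rw [lt_div_iff₀ hdpos] at h
    linarith
  have hdc : (d : ℝ) * c < p * n := by
    have h1 : (d : ℝ) * c ≤ d * (δ' * n) := by nlinarith
    have h2 : (d : ℝ) * (δ' * n) < p * n := by nlinarith
    linarith
  have han : a < n := by
    rw [ha, div_lt_iff₀ hppos]
    linarith
  have hstep : ∀ t ∈ Finset.range (n + 1),
      (p : ℝ) * max 0 ((t : ℝ) - a) ≤ (stackH p (d - p) b t : ℝ) := by
    intro t ht
    have htn : t ≤ n := by
      have := Finset.mem_range.1 ht; omega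
    have hct : (cars b t : ℝ) ≤ (c : ℝ) := by
      exact_mod_cast cars_mono b htn
    have h1 := stackH_lower_real p d hpd.le b t
    have hH0 : (0 : ℝ) ≤ (stackH p (d - p) b t : ℝ) := by positivity
    rcases le_or_gt ((t : ℝ)) a with hta | hta
    · rw [max_eq_left (by linarith)]
      simpa using hH0
    · rw [max_eq_right (by linarith)]
      have hpa : (p : ℝ) * a = d * c := by
        rw [ha]; field_simp
      have : (p : ℝ) * ((t : ℝ) - a) = p * t - d * c := by
        rw [mul_sub, hpa]
      rw [this]
      nlinarith
  have hkey : ((p : ℝ) / d - δ') ^ 2 * d * ((n : ℝ)) ^ 2 / (2 * ((p : ℝ) / d))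
      ≤ (p : ℝ) * (((n : ℝ) - a) ^ 2 / 2) := by
    have hXY : (d : ℝ) * n * ((p : ℝ) / d - δ') ≤ p * n - d * c := by
      have hid : (d : ℝ) * n * ((p : ℝ) / d) = p * n := by field_simp
      have : (d : ℝ) * c ≤ d * (δ' * n) := by nlinarith
      nlinarith
    have hY0 : 0 ≤ (d : ℝ) * n * ((p : ℝ) / d - δ') := by
      have : 0 < (p : ℝ) / d - δ' := by linarith
      positivity
    have hL : ((p : ℝ) / d - δ') ^ 2 * d * ((n : ℝ)) ^ 2 / (2 * ((p : ℝ) / d))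
        = ((d : ℝ) * n * ((p : ℝ) / d - δ')) ^ 2 / (2 * p) := by
      field_simp
    have hR : (p : ℝ) * (((n : ℝ) - a) ^ 2 / 2) = ((p : ℝ) * n - d * c) ^ 2 / (2 * p) := by
      rw [ha]
      field_simp
    rw [hL, hR]
    gcongr
  have hsum := sum_max_gt n a ha0 han
  calc ((p : ℝ) / d - δ') ^ 2 * d * ((K : ℝ) - 1) ^ 2 / (2 * ((p : ℝ) / d))
      = ((p : ℝ) / d - δ') ^ 2 * d * ((n : ℝ)) ^ 2 / (2 * ((p : ℝ) / d)) := by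
        rw [hnR]
    _ ≤ (p : ℝ) * (((n : ℝ) - a) ^ 2 / 2) := hkey
    _ < (p : ℝ) * ∑ t ∈ Finset.range (n + 1), max 0 ((t : ℝ) - a) := by
        exact mul_lt_mul_of_pos_left hsum hppos
    _ = ∑ t ∈ Finset.range (n + 1), (p : ℝ) * max 0 ((t : ℝ) - a) := by
        rw [Finset.mul_sum]
    _ ≤ ∑ t ∈ Finset.range (n + 1), (stackH p (d - p) b t : ℝ) :=
        Finset.sum_le_sum hstep
    _ = ∑ t ∈ Finset.range K, (stackH p (d - p) b t : ℝ) := by rw [hKn]
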